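/- Let S and A be finite nonempty sets, d a probability vector on S, π(·|s) a probability vector on A for each s ∈ S, and ρ(s,a) = d(s)·π(a|s). Let r, r̃ : S×A → ℝ, write r^π(s) = Σ_a π(a|s)·r(s,a) and r̃^π(s) = Σ_a π(a|s)·r̃(s,a), and let α > 0, ε > 0. If α·LSE_S((r^π − r̃^π)/α) ≤ ε + α·log|S|, then Σ_{s,a} ρ(s,a)·r̃(s,a) ≥ Σ_{s,a} ρ(s,a)·r(s,a) + α·(H(d) − log|S|) − ε. (Weak duality direction of the state-entropy reward-robustness theorem.) -/

import Mathlib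

open Real Finset

/-- Gibbs / Donsker–Varadhan inequality over a finite type. -/
lemma gibbs_aux {S : Type*} [Fintype S] (d v : S → ℝ)
    (hd0 : ∀ s, 0 ≤ d s) (hd1 : ∑ s, d s = 1) :
    ∑ s, d s * v s - ∑ s, d s * Real.log (d s) ≤ Real.log (∑ s, Real.exp (v s)) := by
  set T : Finset S := Finset.univ.filter (fun s => 0 < d s) with hT
  have hsumT : ∑ s ∈ T, d s = 1 := by
    rw [← hd1]
    apply Finset.sum_subset (Finset.subset_univ T)
    intro s _ hs
    have : ¬ 0 < d s := by simpa [hT] using hs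
    linarith [hd0 s]
  have key : ∑ s ∈ T, d s • Real.log (Real.exp (v s) / d s)
      ≤ Real.log (∑ s ∈ T, d s • (Real.exp (v s) / d s)) := by
    apply strictConcaveOn_log_Ioi.concaveOn.le_map_sum
    · intro i _; exact hd0 i
    · exact hsumT
    · intro i hi
      have : 0 < d i := by simpa [hT] using hi
      exact Set.mem_Ioi.mpr (div_pos (Real.exp_pos _) this)
  have h1 : ∑ s, d s * v s - ∑ s, d s * Real.log (d s)
      = ∑ s ∈ T, d s • Real.log (Real.exp (v s) / d s) := by
    rw [← Finset.sum_sub_distrib]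
    rw [← Finset.sum_subset (Finset.subset_univ T) (by
      intro s _ hs
      have hz : d s = 0 := by
        have : ¬ 0 < d s := by simpa [hT] using hs
        linarith [hd0 s]
      simp [hz])]
    refine Finset.sum_congr rfl fun s hs => ?_
    have hpos : 0 < d s := by simpa [hT] using hs
    rw [smul_eq_mul, Real.log_div (Real.exp_ne_zero _) (ne_of_gt hpos), Real.log_exp]
    ring
  have h2 : ∑ s ∈ T, d s • (Real.exp (v s) / d s) = ∑ s ∈ T, Real.exp (v s) := by
    refine Finset.sum_congr rfl fun s hs => ?_
    have hpos : 0 < d s := by simpa [hT] using hs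
    rw [smul_eq_mul, mul_div_assoc', mul_comm, mul_div_assoc, div_self (ne_of_gt hpos), mul_one]
  have h3 : ∑ s ∈ T, Real.exp (v s) ≤ ∑ s, Real.exp (v s) :=
    Finset.sum_le_sum_of_subset_of_nonneg (Finset.subset_univ T)
      (fun i _ _ => (Real.exp_pos _).le)
  calc ∑ s, d s * v s - ∑ s, d s * Real.log (d s)
      = ∑ s ∈ T, d s • Real.log (Real.exp (v s) / d s) := h1
    _ ≤ Real.log (∑ s ∈ T, d s • (Real.exp (v s) / d s)) := key
    _ = Real.log (∑ s ∈ T, Real.exp (v s)) := by rw [h2]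
    _ ≤ Real.log (∑ s, Real.exp (v s)) := by
        have hTne : T.Nonempty := by
          by_contra h
          rw [Finset.not_nonempty_iff_eq_empty] at h
          rw [h] at hsumT
          simp at hsumT
        exact Real.log_le_log (Finset.sum_pos (fun i _ => Real.exp_pos _) hTne) h3

/-- **Weak duality direction of the state-entropy reward-robustness theorem.**
If the perturbed reward `rt` satisfies the LSE constraint over states, then the
perturbed return is lower bounded by the state-entropy regularized return. -/
theorem stmt_1 {S A : Type*} [Fintype S] [Nonempty S] [Fintype A] [Nonempty A]
    (d : S → ℝ) (pol : S → A → ℝ)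
    (hd0 : ∀ s, 0 ≤ d s) (hd1 : ∑ s, d s = 1)
    (hpol0 : ∀ s a, 0 ≤ pol s a) (hpol1 : ∀ s, ∑ a, pol s a = 1)
    (r rt : S → A → ℝ) (α ε : ℝ) (hα : 0 < α) (hε : 0 < ε)
    (hcon : α * Real.log (∑ s, Real.exp
        (((∑ a, pol s a * r s a) - (∑ a, pol s a * rt s a)) / α))
      ≤ ε + α * Real.log (Fintype.card S)) :
    ∑ s, ∑ a, (d s * pol s a) * rt s a ≥
      (∑ s, ∑ a, (d s * pol s a) * r s a)
        + α * ((-∑ s, d s * Real.log (d s)) - Real.log (Fintype.card S)) - ε := by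
  set u : S → ℝ := fun s => (∑ a, pol s a * r s a) - (∑ a, pol s a * rt s a) with hu
  have gibbs := gibbs_aux d (fun s => u s / α) hd0 hd1
  have gibbs' : ∑ s, d s * u s - α * ∑ s, d s * Real.log (d s)
      ≤ α * Real.log (∑ s, Real.exp (u s / α)) := by
    have := mul_le_mul_of_nonneg_left gibbs hα.le
    calc ∑ s, d s * u s - α * ∑ s, d s * Real.log (d s)
        = α * (∑ s, d s * (u s / α) - ∑ s, d s * Real.log (d s)) := by
          rw [mul_sub]
          congr 1
          rw [Finset.mul_sum]
          refine Finset.sum_congr rfl fun s _ => ?_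
          field_simp
      _ ≤ α * Real.log (∑ s, Real.exp (u s / α)) := this
  have hkey : ∑ s, d s * u s ≤ ε + α * Real.log (Fintype.card S)
      + α * ∑ s, d s * Real.log (d s) := by linarith
  have hexp : ∀ (f : S → A → ℝ), ∑ s, ∑ a, (d s * pol s a) * f s a
      = ∑ s, d s * ∑ a, pol s a * f s a := by
    intro f
    refine Finset.sum_congr rfl fun s _ => ?_
    rw [Finset.mul_sum]
    exact Finset.sum_congr rfl fun a _ => by ring
  have hsplit : ∑ s, d s * u s
      = (∑ s, ∑ a, (d s * pol s a) * r s a) - ∑ s, ∑ a, (d s * pol s a) * rt s a := by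
    rw [hexp r, hexp rt, ← Finset.sum_sub_distrib]
    exact Finset.sum_congr rfl fun s _ => by rw [hu]; ring
  rw [hsplit] at hkey
  linarith
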